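/- Let (X_n)_{n≥1} be a sequence of real-valued random variables such that φ(u_k) and φ(v_k) are integrable for every k ≥ 0. Let φ : ℝ → ℝ be a nonnegative nondecreasing convex function with φ(0) = 0 for which there exists a real constant K > 0 such that φ(x + y) ≤ K(φ(x) + φ(y)) for all real x, y. Let χ be a positive nondecreasing function on (0,∞), and let 0 = b_0 < b_1 ≤ b_2 ≤ … ≤ b_n be real numbers. Then P( φ(S_k) ≤ χ(b_k) for all 1 ≤ k ≤ n ) ≥ 1 − 2K · Σ_{k=1}^n ( E[φ(u_k)] + E[φ(v_k)] − E[φ(u_{k−1})] − E[φ(v_{k−1})] ) / χ(b_k). -/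

import Mathlib

open MeasureTheory Filter

private lemma sum_Icc_one_eq_range' (g : ℕ → ℝ) (n : ℕ) :
    ∑ k ∈ Finset.Icc 1 n, g k = ∑ k ∈ Finset.range n, g (k + 1) := by
  rw [← Finset.Ico_add_one_right_eq_Icc, Finset.sum_Ico_eq_sum_range]
  simp [add_comm]

/-- **Hájek–Rényi type inequality for arbitrary random variables**
(Theorem 3.1 of Ndiaye–Lo). Here `S n = Σ_{i=1}^n X_i`, `u n = Σ_{i=1}^n X_i⁺`,
`v n = Σ_{i=1}^n X_i⁻`. -/
theorem hajek_renyi_type_inequality_arbitrary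
    {Ω : Type*} [MeasurableSpace Ω] (μ : Measure Ω) [IsProbabilityMeasure μ]
    (X S u v : ℕ → Ω → ℝ)
    (hXmeas : ∀ i, 1 ≤ i → Measurable (X i))
    (hS : ∀ k ω, S k ω = ∑ i ∈ Finset.Icc 1 k, X i ω)
    (hu : ∀ k ω, u k ω = ∑ i ∈ Finset.Icc 1 k, max (X i ω) 0)
    (hv : ∀ k ω, v k ω = ∑ i ∈ Finset.Icc 1 k, max (-(X i ω)) 0)
    (φ : ℝ → ℝ)
    (hφ_nonneg : ∀ x, 0 ≤ φ x)
    (hφ_mono : Monotone φ)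
    (hφ_convex : ConvexOn ℝ Set.univ φ)
    (hφ_zero : φ 0 = 0)
    (K : ℝ) (hK : 0 < K)
    (hφ_subadd : ∀ x y : ℝ, φ (x + y) ≤ K * (φ x + φ y))
    (hu_int : ∀ k, Integrable (fun ω => φ (u k ω)) μ)
    (hv_int : ∀ k, Integrable (fun ω => φ (v k ω)) μ)
    (χ : ℝ → ℝ)
    (hχ_pos : ∀ b : ℝ, 0 < b → 0 < χ b)
    (hχ_mono : ∀ a b : ℝ, 0 < a → a ≤ b → χ a ≤ χ b)
    (n : ℕ) (b : ℕ → ℝ)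
    (hb0 : b 0 = 0) (hb1 : 0 < b 1)
    (hb_mono : ∀ k, 1 ≤ k → k < n → b k ≤ b (k + 1)) :
    1 - 2 * K * ∑ k ∈ Finset.Icc 1 n,
        ((∫ ω, φ (u k ω) ∂μ) + (∫ ω, φ (v k ω) ∂μ)
          - (∫ ω, φ (u (k - 1) ω) ∂μ) - (∫ ω, φ (v (k - 1) ω) ∂μ)) / χ (b k)
      ≤ (μ {ω | ∀ k, 1 ≤ k → k ≤ n → φ (S k ω) ≤ χ (b k)}).toReal := by
  classical
  -- monotonicity and positivity of b, χ∘b on [1,n]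
  have hbmono : ∀ j k, 1 ≤ j → j ≤ k → k ≤ n → b j ≤ b k := by
    intro j k hj hjk hkn
    induction k, hjk using Nat.le_induction with
    | base => exact le_rfl
    | succ k hk ih =>
      exact (ih (by omega)).trans (hb_mono k (by omega) (by omega))
  have hbpos : ∀ k, 1 ≤ k → k ≤ n → 0 < b k := fun k h1 h2 =>
    lt_of_lt_of_le hb1 (hbmono 1 k le_rfl h1 h2)
  have hcpos : ∀ k, 1 ≤ k → k ≤ n → 0 < χ (b k) := fun k h1 h2 => hχ_pos _ (hbpos k h1 h2)
  have hcmono : ∀ j k, 1 ≤ j → j ≤ k → k ≤ n → χ (b j) ≤ χ (b k) := fun j k h1 h2 h3 =>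
    hχ_mono _ _ (hbpos j h1 (h2.trans h3)) (hbmono j k h1 h2 h3)
  -- the auxiliary process T
  set T : ℕ → Ω → ℝ := fun k ω => φ (u k ω) + φ (v k ω) with hT
  have hT0 : ∀ ω, T 0 ω = 0 := by
    intro ω; simp [hT, hu, hv, hφ_zero]
  have humono : ∀ j k, j ≤ k → ∀ ω, u j ω ≤ u k ω := by
    intro j k hjk ω
    rw [hu, hu]
    refine Finset.sum_le_sum_of_subset_of_nonneg (Finset.Icc_subset_Icc_right hjk) ?_
    intro i _ _; exact le_max_right _ _
  have hvmono : ∀ j k, j ≤ k → ∀ ω, v j ω ≤ v k ω := by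
    intro j k hjk ω
    rw [hv, hv]
    refine Finset.sum_le_sum_of_subset_of_nonneg (Finset.Icc_subset_Icc_right hjk) ?_
    intro i _ _; exact le_max_right _ _
  have hTmono : ∀ j k, j ≤ k → ∀ ω, T j ω ≤ T k ω := fun j k hjk ω =>
    add_le_add (hφ_mono (humono j k hjk ω)) (hφ_mono (hvmono j k hjk ω))
  have hSleT : ∀ k ω, φ (S k ω) ≤ T k ω := by
    intro k ω
    have h1 : S k ω ≤ u k ω := by
      rw [hS, hu]; exact Finset.sum_le_sum fun i _ => le_max_left _ _
    calc φ (S k ω) ≤ φ (u k ω) := hφ_mono h1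
      _ ≤ T k ω := le_add_of_nonneg_right (hφ_nonneg _)
  -- the weighted increment sum Z
  set Z : Ω → ℝ := fun ω => ∑ k ∈ Finset.Icc 1 n, (T k ω - T (k - 1) ω) / χ (b k) with hZ
  have hZnonneg : ∀ ω, 0 ≤ Z ω := by
    intro ω
    refine Finset.sum_nonneg fun k hk => ?_
    simp only [Finset.mem_Icc] at hk
    have h := hTmono (k - 1) k (by omega) ω
    exact div_nonneg (by linarith) (hcpos k hk.1 hk.2).le
  -- telescoping
  have htel : ∀ ω j, T j ω = ∑ k ∈ Finset.Icc 1 j, (T k ω - T (k - 1) ω) := by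
    intro ω j
    rw [sum_Icc_one_eq_range']
    simp only [Nat.add_sub_cancel]
    rw [Finset.sum_range_sub (fun i => T i ω), hT0]
    ring
  -- Abel-type bound
  have habel : ∀ ω j, 1 ≤ j → j ≤ n → T j ω / χ (b j) ≤ Z ω := by
    intro ω j h1 h2
    rw [htel ω j, Finset.sum_div]
    calc ∑ k ∈ Finset.Icc 1 j, (T k ω - T (k - 1) ω) / χ (b j)
        ≤ ∑ k ∈ Finset.Icc 1 j, (T k ω - T (k - 1) ω) / χ (b k) := by
          refine Finset.sum_le_sum fun k hk => ?_
          simp only [Finset.mem_Icc] at hk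
          have hΔ : 0 ≤ T k ω - T (k - 1) ω := by
            have := hTmono (k - 1) k (by omega) ω; linarith
          exact div_le_div_of_nonneg_left hΔ (hcpos k hk.1 (hk.2.trans h2))
            (hcmono k j hk.1 hk.2 h2)
      _ ≤ Z ω := by
          refine Finset.sum_le_sum_of_subset_of_nonneg (Finset.Icc_subset_Icc_right h2) ?_
          intro k hk _
          simp only [Finset.mem_Icc] at hk
          have := hTmono (k - 1) k (by omega) ω
          exact div_nonneg (by linarith) (hcpos k hk.1 hk.2).le
  -- measurability of the event
  have hSmeas : ∀ k, Measurable (S k) := by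
    intro k
    have hSe : S k = fun ω => ∑ i ∈ Finset.Icc 1 k, X i ω := funext (hS k)
    rw [hSe]
    exact Finset.measurable_sum _ fun i hi => hXmeas i (Finset.mem_Icc.mp hi).1
  set B : Set Ω := {ω | ∀ k, 1 ≤ k → k ≤ n → φ (S k ω) ≤ χ (b k)} with hB
  have hBmeas : MeasurableSet B := by
    have hBe : B = ⋂ (k : ℕ) (_ : 1 ≤ k) (_ : k ≤ n), {ω | φ (S k ω) ≤ χ (b k)} := by
      ext ω; simp [hB, Set.mem_iInter]
    rw [hBe]
    refine MeasurableSet.iInter fun k => MeasurableSet.iInter fun _ =>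
      MeasurableSet.iInter fun _ => ?_
    exact measurableSet_le (hφ_mono.measurable.comp (hSmeas k)) measurable_const
  -- indicator bound
  have hind : ∀ ω, Set.indicator Bᶜ (1 : Ω → ℝ) ω ≤ Z ω := by
    intro ω
    by_cases hω : ω ∈ Bᶜ
    · rw [Set.indicator_of_mem hω, Pi.one_apply]
      simp only [hB, Set.mem_compl_iff, Set.mem_setOf_eq] at hω
      push_neg at hω
      obtain ⟨k, h1, h2, h3⟩ := hω
      have hck := hcpos k h1 h2
      have h4 : 1 < T k ω / χ (b k) := by
        rw [lt_div_iff₀ hck]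
        have := hSleT k ω
        linarith
      exact h4.le.trans (habel ω k h1 h2)
    · rw [Set.indicator_of_notMem hω]; exact hZnonneg ω
  -- integrability
  have hTint : ∀ k, Integrable (fun ω => T k ω) μ := fun k => (hu_int k).add (hv_int k)
  have hZint : Integrable Z μ := by
    refine integrable_finset_sum _ fun k _ => ?_
    exact ((hTint k).sub (hTint (k - 1))).div_const _
  -- measure of the complement is bounded by ∫ Z
  have hcompl : (μ Bᶜ).toReal ≤ ∫ ω, Z ω ∂μ := by
    change μ.real Bᶜ ≤ _
    rw [← integral_indicator_one hBmeas.compl]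
    exact integral_mono ((integrable_const (1 : ℝ)).indicator hBmeas.compl) hZint hind
  -- compute ∫ Z
  have hZeq : ∫ ω, Z ω ∂μ = ∑ k ∈ Finset.Icc 1 n,
      ((∫ ω, φ (u k ω) ∂μ) + (∫ ω, φ (v k ω) ∂μ)
        - (∫ ω, φ (u (k - 1) ω) ∂μ) - (∫ ω, φ (v (k - 1) ω) ∂μ)) / χ (b k) := by
    simp only [hZ]
    rw [integral_finset_sum]
    case hf => exact fun k _ => ((hTint k).sub (hTint (k - 1))).div_const _
    refine Finset.sum_congr rfl fun k _ => ?_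
    rw [integral_div, integral_sub (hTint k) (hTint (k - 1))]
    simp only [hT]
    rw [integral_add (hu_int k) (hv_int k), integral_add (hu_int (k - 1)) (hv_int (k - 1))]
    ring
  have hSumNonneg : 0 ≤ ∑ k ∈ Finset.Icc 1 n,
      ((∫ ω, φ (u k ω) ∂μ) + (∫ ω, φ (v k ω) ∂μ)
        - (∫ ω, φ (u (k - 1) ω) ∂μ) - (∫ ω, φ (v (k - 1) ω) ∂μ)) / χ (b k) := by
    rw [← hZeq]
    exact integral_nonneg hZnonneg
  have hcompl' : (μ Bᶜ).toReal ≤ ∑ k ∈ Finset.Icc 1 n,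
      ((∫ ω, φ (u k ω) ∂μ) + (∫ ω, φ (v k ω) ∂μ)
        - (∫ ω, φ (u (k - 1) ω) ∂μ) - (∫ ω, φ (v (k - 1) ω) ∂μ)) / χ (b k) :=
    hZeq ▸ hcompl
  have htot : (μ B).toReal + (μ Bᶜ).toReal = 1 := by
    rw [← ENNReal.toReal_add (measure_ne_top μ B) (measure_ne_top μ Bᶜ),
      measure_add_measure_compl hBmeas, measure_univ, ENNReal.toReal_one]
  have hKbound : (∑ k ∈ Finset.Icc 1 n,
      ((∫ ω, φ (u k ω) ∂μ) + (∫ ω, φ (v k ω) ∂μ)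
        - (∫ ω, φ (u (k - 1) ω) ∂μ) - (∫ ω, φ (v (k - 1) ω) ∂μ)) / χ (b k))
      ≤ 2 * K * ∑ k ∈ Finset.Icc 1 n,
      ((∫ ω, φ (u k ω) ∂μ) + (∫ ω, φ (v k ω) ∂μ)
        - (∫ ω, φ (u (k - 1) ω) ∂μ) - (∫ ω, φ (v (k - 1) ω) ∂μ)) / χ (b k) := by
    by_cases hφall : ∀ x, φ x = 0
    · have hzero : ∀ k : ℕ, (∫ ω, φ (u k ω) ∂μ) = 0 ∧ (∫ ω, φ (v k ω) ∂μ) = 0 := by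
        intro k
        constructor <;> simp [hφall]
      have : (∑ k ∈ Finset.Icc 1 n,
          ((∫ ω, φ (u k ω) ∂μ) + (∫ ω, φ (v k ω) ∂μ)
            - (∫ ω, φ (u (k - 1) ω) ∂μ) - (∫ ω, φ (v (k - 1) ω) ∂μ)) / χ (b k)) = 0 := by
        refine Finset.sum_eq_zero fun k _ => ?_
        rw [(hzero k).1, (hzero k).2, (hzero (k - 1)).1, (hzero (k - 1)).2]
        ring
      rw [this]
      ring_nf
      exact le_rfl
    · push_neg at hφall
      obtain ⟨x, hx⟩ := hφall
      have hxpos : 0 < φ x := lt_of_le_of_ne (hφ_nonneg x) (Ne.symm hx)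
      have hK1 : 1 ≤ K := by
        have h := hφ_subadd x 0
        rw [add_zero, hφ_zero, add_zero] at h
        nlinarith
      nlinarith
  linarith
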